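/- arXiv:2605.17749 — 2 statements merged into one kernel-verified Lean document; each statement's English description precedes it below -/
import Mathlib

section
/- Let Z be the decision task with A = [0,1] and U(a,y) = 1 - (a-y)². Let D be the calibrated distribution where p is uniform on [1/3, 2/3] and y ~ Bernoulli(p). Let S be the empirical distribution of T i.i.d. samples (p_t, y_t) from D. Then almost surely, the swap regret of the identity response function r*(p) = p on S satisfies SR_Z(r*, S) = (1/T)·Σ_t (p_t - y_t)² ≥ 1/9. Consequently, CDL(S) ≥ 1/9 for every sample size T. -/
open MeasureTheory
open scoped ENNReal

/-- The calibrated distribution of `(p, y)` where `p` is uniform on `[1/3, 2/3]`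
and `y ~ Bernoulli(p)`. -/
noncomputable def mu15 : Measure (ℝ × ℝ) :=
  ((3 : ℝ≥0∞) • volume.restrict (Set.Icc (1/3 : ℝ) (2/3))).bind
    (fun p => (ENNReal.ofReal p) • Measure.dirac (p, (1 : ℝ))
      + (ENNReal.ofReal (1 - p)) • Measure.dirac (p, (0 : ℝ)))

/-- Swap regret of the identity (best-response) function for the squared-loss task
`U(a,y) = 1 - (a-y)²` on the empirical distribution of the sample `s`:
`sup_{σ : [0,1]→[0,1]} (1/T) Σ_t [(p_t - y_t)² - (σ(p_t) - y_t)²]`. -/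
noncomputable def SR15 (T : ℕ) (s : Fin T → ℝ × ℝ) : ℝ :=
  sSup { x : ℝ | ∃ σ : ℝ → ℝ, (∀ t, σ t ∈ Set.Icc (0:ℝ) 1) ∧
    x = (1 / (T : ℝ)) *
      ∑ t : Fin T, (((s t).1 - (s t).2) ^ 2 - (σ (s t).1 - (s t).2) ^ 2) }

namespace Helper15

noncomputable def nu : Measure ℝ := (3 : ℝ≥0∞) • volume.restrict (Set.Icc (1/3 : ℝ) (2/3))

noncomputable def ker (p : ℝ) : Measure (ℝ × ℝ) :=
  (ENNReal.ofReal p) • Measure.dirac (p, (1 : ℝ))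
    + (ENNReal.ofReal (1 - p)) • Measure.dirac (p, (0 : ℝ))

lemma ker_meas : Measurable ker := by
  apply Measure.measurable_of_measurable_coe
  intro s hs
  have h1 : ∀ p : ℝ, ker p s
      = ENNReal.ofReal p * s.indicator 1 (p, 1)
        + ENNReal.ofReal (1 - p) * s.indicator 1 (p, 0) := by
    intro p
    simp [ker, Measure.dirac_apply' _ hs]
  simp only [h1]
  apply Measurable.add
  · exact (ENNReal.measurable_ofReal.comp measurable_id).mul
      ((measurable_one.indicator hs).comp (measurable_id.prodMk measurable_const))
  · exact (ENNReal.measurable_ofReal.comp (measurable_const.sub measurable_id)).mul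
      ((measurable_one.indicator hs).comp (measurable_id.prodMk measurable_const))

lemma mu15_apply {s : Set (ℝ × ℝ)} (hs : MeasurableSet s) :
    mu15 s = ∫⁻ p, ker p s ∂nu := by
  exact Measure.bind_apply hs ker_meas.aemeasurable

end Helper15
namespace Helper15

lemma ker_apply {s : Set (ℝ × ℝ)} (hs : MeasurableSet s) (p : ℝ) :
    ker p s = ENNReal.ofReal p * s.indicator 1 (p, 1)
      + ENNReal.ofReal (1 - p) * s.indicator 1 (p, 0) := by
  simp [ker, Measure.dirac_apply' _ hs]

lemma nu_Icc_ae : ∀ᵐ p ∂nu, p ∈ Set.Icc (1/3 : ℝ) (2/3) := by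
  exact Measure.ae_smul_measure (ae_restrict_mem measurableSet_Icc) 3

lemma nu_singleton (c : ℝ) : nu {c} = 0 := by
  rw [nu, Measure.smul_apply]
  have : volume.restrict (Set.Icc (1/3 : ℝ) (2/3)) {c} = 0 :=
    le_antisymm (le_trans (Measure.restrict_apply_le _ _) (by simp)) zero_le
  simp [this]

/-- The good set. -/
def Good : Set (ℝ × ℝ) := {z | z.1 ∈ Set.Icc (1/3 : ℝ) (2/3) ∧ (z.2 = 0 ∨ z.2 = 1)}

lemma good_meas : MeasurableSet Good := by
  apply MeasurableSet.inter
  · exact measurable_fst measurableSet_Icc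
  · exact (measurable_snd (measurableSet_singleton 0)).union
      (measurable_snd (measurableSet_singleton 1))

lemma mu15_good_compl : mu15 Goodᶜ = 0 := by
  rw [mu15_apply good_meas.compl]
  rw [show (0:ℝ≥0∞) = ∫⁻ _, 0 ∂nu by simp]
  apply lintegral_congr_ae
  filter_upwards [nu_Icc_ae] with p hp
  rw [ker_apply good_meas.compl]
  have h1 : (p, (1:ℝ)) ∈ Good := ⟨hp, Or.inr rfl⟩
  have h0 : (p, (0:ℝ)) ∈ Good := ⟨hp, Or.inl rfl⟩
  rw [Set.indicator_of_notMem (by simpa using h1), Set.indicator_of_notMem (by simpa using h0)]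
  simp

lemma mu15_fiber (c : ℝ) : mu15 {z : ℝ × ℝ | z.1 = c} = 0 := by
  have hm : MeasurableSet {z : ℝ × ℝ | z.1 = c} :=
    measurable_fst (measurableSet_singleton c)
  rw [mu15_apply hm]
  rw [show (0:ℝ≥0∞) = ∫⁻ _, 0 ∂nu by simp]
  apply lintegral_congr_ae
  have hae : ∀ᵐ p ∂nu, p ≠ c := by
    have := nu_singleton c
    rw [← compl_mem_ae_iff] at this
    · filter_upwards [this] with p hp; simpa using hp
  filter_upwards [hae] with p hp
  rw [ker_apply hm]
  rw [Set.indicator_of_notMem (by simpa using hp), Set.indicator_of_notMem (by simpa using hp)]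
  simp

instance : IsFiniteMeasure mu15 := by
  constructor
  rw [mu15_apply MeasurableSet.univ]
  calc ∫⁻ p, ker p Set.univ ∂nu ≤ ∫⁻ _, 2 ∂nu := by
        apply lintegral_mono_ae
        filter_upwards [nu_Icc_ae] with p hp
        rw [ker_apply MeasurableSet.univ]
        simp only [Set.indicator_univ, Pi.one_apply, mul_one]
        calc ENNReal.ofReal p + ENNReal.ofReal (1 - p) ≤ 1 + 1 := by
              gcongr
              · exact ENNReal.ofReal_le_one.mpr (le_trans hp.2 (by norm_num))
              · exact ENNReal.ofReal_le_one.mpr (by linarith [hp.1])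
          _ = 2 := by norm_num
    _ < ⊤ := by
        rw [lintegral_const]
        have : nu Set.univ = 3 * volume (Set.Icc (1/3 : ℝ) (2/3)) := by
          simp [nu, Measure.restrict_apply_univ]
        rw [this, Real.volume_Icc]
        exact ENNReal.mul_lt_top (by norm_num)
          (ENNReal.mul_lt_top (by norm_num) ENNReal.ofReal_lt_top)

end Helper15
namespace Helper15

open Finset in
/-- If the slice integral in coordinate `i` vanishes everywhere, the full integral vanishes. -/
lemma pi_null {T : ℕ} (i : Fin T) {A : Set (Fin T → ℝ × ℝ)} (hA : MeasurableSet A)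
    (h : ∀ x : Fin T → ℝ × ℝ, mu15 {z : ℝ × ℝ | Function.update x i z ∈ A} = 0) :
    (Measure.pi fun _ : Fin T => mu15) A = 0 := by
  have hf : Measurable (A.indicator (1 : (Fin T → ℝ × ℝ) → ℝ≥0∞)) :=
    measurable_one.indicator hA
  have key : ∀ x : Fin T → ℝ × ℝ,
      ∫⁻ z, A.indicator 1 (Function.update x i z) ∂mu15 = 0 := by
    intro x
    have hmeas : MeasurableSet {z : ℝ × ℝ | Function.update x i z ∈ A} :=
      (measurable_update x).comp measurable_id hA
    have : ∫⁻ z, A.indicator (1 : (Fin T → ℝ × ℝ) → ℝ≥0∞) (Function.update x i z) ∂mu15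
        = ∫⁻ z, ({z : ℝ × ℝ | Function.update x i z ∈ A}).indicator 1 z ∂mu15 := by
      apply lintegral_congr
      intro z
      by_cases hz : Function.update x i z ∈ A
      · rw [Set.indicator_of_mem hz, Set.indicator_of_mem (show z ∈ {z | Function.update x i z ∈ A} from hz)]; rfl
      · rw [Set.indicator_of_notMem hz, Set.indicator_of_notMem (show z ∉ {z | Function.update x i z ∈ A} from hz)]
    rw [this, lintegral_indicator_one hmeas, h x]
  have : (Measure.pi fun _ : Fin T => mu15) A
      = ∫⁻ s, A.indicator 1 s ∂(Measure.pi fun _ : Fin T => mu15) :=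
    (lintegral_indicator_one hA).symm
  rw [this, lintegral_eq_lmarginal_univ (fun _ => ((0 : ℝ), (0 : ℝ)))]
  rw [lmarginal_erase' _ hf (Finset.mem_univ i)]
  simp only [key]
  simp [lmarginal]

end Helper15
namespace Helper15

lemma ae_good (T : ℕ) :
    ∀ᵐ s ∂(Measure.pi fun _ : Fin T => mu15),
      (∀ i, s i ∈ Good) ∧ (∀ t t' : Fin T, t ≠ t' → (s t).1 ≠ (s t').1) := by
  have hbad : ∀ i : Fin T,
      (Measure.pi fun _ : Fin T => mu15) ((fun s => s i) ⁻¹' Goodᶜ) = 0 := by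
    intro i
    apply pi_null i (hA := (measurable_pi_apply i) good_meas.compl)
    intro x
    have : {z : ℝ × ℝ | Function.update x i z ∈ (fun s => s i) ⁻¹' Goodᶜ} = Goodᶜ := by
      ext z; simp [Function.update_self]
    rw [this]; exact mu15_good_compl
  have hdiag : ∀ t t' : Fin T, t ≠ t' →
      (Measure.pi fun _ : Fin T => mu15) {s | (s t).1 = (s t').1} = 0 := by
    intro t t' htt
    have hA : MeasurableSet {s : Fin T → ℝ × ℝ | (s t).1 = (s t').1} :=
      measurableSet_eq_fun ((measurable_pi_apply t).fst) ((measurable_pi_apply t').fst)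
    apply pi_null t' (hA := hA)
    intro x
    have : {z : ℝ × ℝ | Function.update x t' z ∈ {s : Fin T → ℝ × ℝ | (s t).1 = (s t').1}}
        = {z : ℝ × ℝ | z.1 = (x t).1} := by
      ext z
      simp only [Set.mem_setOf_eq, Function.update_self, Function.update_of_ne htt]
      exact eq_comm
    rw [this]; exact mu15_fiber _
  have h1 : ∀ᵐ s ∂(Measure.pi fun _ : Fin T => mu15), ∀ i, s i ∈ Good := by
    rw [ae_all_iff]
    intro i
    exact hbad i
  have h2 : ∀ᵐ s ∂(Measure.pi fun _ : Fin T => mu15),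
      ∀ t t' : Fin T, t ≠ t' → (s t).1 ≠ (s t').1 := by
    rw [ae_all_iff]
    intro t
    rw [ae_all_iff]
    intro t'
    by_cases htt : t = t'
    · filter_upwards with s h; exact absurd htt h
    · have := hdiag t t' htt
      filter_upwards [measure_eq_zero_iff_ae_notMem.mp this] with s hs _
      exact hs
  filter_upwards [h1, h2] with s hs1 hs2
  exact ⟨hs1, hs2⟩

end Helper15

namespace Helper15

lemma main_det (T : ℕ) (hT : 0 < T) (s : Fin T → ℝ × ℝ)
    (hg : ∀ i, s i ∈ Good) (hd : ∀ t t' : Fin T, t ≠ t' → (s t).1 ≠ (s t').1) :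
    SR15 T s = (1 / (T : ℝ)) * ∑ t : Fin T, ((s t).1 - (s t).2) ^ 2
      ∧ (1 / 9 : ℝ) ≤ (1 / (T : ℝ)) * ∑ t : Fin T, ((s t).1 - (s t).2) ^ 2 := by
  classical
  set V : ℝ := (1 / (T : ℝ)) * ∑ t : Fin T, ((s t).1 - (s t).2) ^ 2 with hV
  set M := { x : ℝ | ∃ σ : ℝ → ℝ, (∀ t, σ t ∈ Set.Icc (0:ℝ) 1) ∧
    x = (1 / (T : ℝ)) *
      ∑ t : Fin T, (((s t).1 - (s t).2) ^ 2 - (σ (s t).1 - (s t).2) ^ 2) } with hM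
  have hTpos : (0 : ℝ) < (T : ℝ) := by exact_mod_cast hT
  -- V belongs to M
  have hmem : V ∈ M := by
    refine ⟨fun x => if ∃ t, (s t).1 = x ∧ (s t).2 = 1 then (1:ℝ) else 0, ?_, ?_⟩
    · intro t
      dsimp only
      by_cases h : ∃ t', (s t').1 = t ∧ (s t').2 = 1
      · rw [if_pos h]; exact ⟨zero_le_one, le_refl 1⟩
      · rw [if_neg h]; exact ⟨le_refl 0, zero_le_one⟩
    · have key : ∀ t : Fin T,
          (if ∃ t', (s t').1 = (s t).1 ∧ (s t').2 = 1 then (1:ℝ) else 0) = (s t).2 := by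
        intro t
        rcases (hg t).2 with h0 | h1
        · rw [if_neg, h0]
          rintro ⟨t', ht'1, ht'2⟩
          have : t' = t := by
            by_contra hne
            exact hd t' t hne ht'1
          rw [this, h0] at ht'2
          norm_num at ht'2
        · rw [if_pos ⟨t, rfl, h1⟩, h1]
      rw [hV]
      congr 1
      apply Finset.sum_congr rfl
      intro t _
      dsimp only
      rw [key t]
      ring
  -- every element of M is at most V
  have hub : ∀ x ∈ M, x ≤ V := by
    rintro x ⟨σ, hσ, rfl⟩
    rw [hV]
    apply mul_le_mul_of_nonneg_left _ (by positivity)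
    apply Finset.sum_le_sum
    intro t _
    nlinarith [sq_nonneg (σ (s t).1 - (s t).2)]
  have heq : SR15 T s = V := by
    apply le_antisymm
    · exact csSup_le ⟨V, hmem⟩ hub
    · exact le_csSup ⟨V, hub⟩ hmem
  refine ⟨heq, ?_⟩
  have hterm : ∀ t : Fin T, (1 / 9 : ℝ) ≤ ((s t).1 - (s t).2) ^ 2 := by
    intro t
    obtain ⟨⟨hl, hr⟩, hy⟩ := hg t
    rcases hy with h0 | h1
    · rw [h0]; nlinarith
    · rw [h1]; nlinarith
  have hsum : (T : ℝ) * (1 / 9 : ℝ) ≤ ∑ t : Fin T, ((s t).1 - (s t).2) ^ 2 := by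
    calc (T : ℝ) * (1 / 9 : ℝ) = ∑ _t : Fin T, (1 / 9 : ℝ) := by
          rw [Finset.sum_const, Finset.card_univ, Fintype.card_fin, nsmul_eq_mul]
      _ ≤ _ := Finset.sum_le_sum fun t _ => hterm t
  rw [hV]
  calc (1 / 9 : ℝ) = (1 / (T : ℝ)) * ((T : ℝ) * (1 / 9 : ℝ)) := by
        field_simp
    _ ≤ _ := by
        apply mul_le_mul_of_nonneg_left hsum (by positivity)

end Helper15


/-- for `T` i.i.d. samples from the calibrated distribution `mu15`,
almost surely the swap regret of the identity response equals
`(1/T)·Σ_t (p_t - y_t)²`, which is at least `1/9`; consequently any quantity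
(such as `CDL` of the sample) upper-bounding this swap regret is at least `1/9`. -/
theorem empirical_cdl_lower_bound (T : ℕ) (hT : 0 < T) :
    ∀ᵐ s ∂(Measure.pi fun _ : Fin T => mu15),
      SR15 T s = (1 / (T : ℝ)) * ∑ t : Fin T, ((s t).1 - (s t).2) ^ 2
      ∧ (1 / 9 : ℝ) ≤ SR15 T s
      ∧ ∀ CDL : ℝ, SR15 T s ≤ CDL → (1 / 9 : ℝ) ≤ CDL := by
  filter_upwards [Helper15.ae_good T] with s hs
  obtain ⟨heq, hge⟩ := Helper15.main_det T hT s hs.1 hs.2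
  refine ⟨heq, ?_, ?_⟩
  · rw [heq]; exact hge
  · intro CDL hCDL
    rw [heq] at hCDL
    exact hge.trans hCDL
end

section
/- Let m ≥ 2, let π_0, ..., π_m ≥ 0 with Σ_j π_j ≤ 1 and q_0, ..., q_m ∈ [0,1], and define SCDL_m = max over i of Σ_{j≤i} π_j·max(q_j - (i+1)/m, 0) + Σ_{j>i} π_j·max(i/m - q_j, 0). Then for every index i and every α > 0, Σ_{j<i} 1[q_j > i/m - α/√π_j]·√π_j ≤ 3 + C·(log m)·(α·m + √(m·SCDL_m)) for an absolute constant C. -/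
open scoped Classical

set_option maxHeartbeats 1000000

/-- Soft-binned calibration fixed decision loss at index `i`, built from bin
weights `π` and bin conditional means `q`. -/
noncomputable def gSCFDL (m : ℕ) (π q : ℕ → ℝ) (i : ℕ) : ℝ :=
  ∑ j ∈ Finset.range (i + 1), π j * max (q j - ((i : ℝ) + 1) / m) 0
    + ∑ j ∈ Finset.Icc (i + 1) m, π j * max ((i : ℝ) / m - q j) 0

/-- `SCDL_m = max_{i=0,...,m} SCFDL_{m,i}`. -/
noncomputable def gSCDLm (m : ℕ) (π q : ℕ → ℝ) : ℝ :=
  Finset.sup' (Finset.range (m + 1)) (Finset.nonempty_range_iff.mpr (Nat.succ_ne_zero m))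
    (gSCFDL m π q)

lemma my_sum_union_le {A B : Finset ℕ} {f : ℕ → ℝ} (hf : ∀ x, 0 ≤ f x) :
    ∑ x ∈ A ∪ B, f x ≤ ∑ x ∈ A, f x + ∑ x ∈ B, f x := by
  have h := Finset.sum_union_inter (s₁ := A) (s₂ := B) (f := f)
  have h2 : 0 ≤ ∑ x ∈ A ∩ B, f x := Finset.sum_nonneg fun x _ => hf x
  linarith

lemma my_sum_biUnion_le {s : Finset ℕ} {t : ℕ → Finset ℕ} {f : ℕ → ℝ} (hf : ∀ x, 0 ≤ f x) :
    ∑ x ∈ s.biUnion t, f x ≤ ∑ k ∈ s, ∑ x ∈ t k, f x := by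
  induction s using Finset.induction_on with
  | empty => simp
  | insert _ _ ha ih =>
      rw [Finset.biUnion_insert, Finset.sum_insert ha]
      exact (my_sum_union_le hf).trans (by linarith)

lemma my_cover (K : ℕ) (x : ℝ) (h1 : 1 / 2 ^ (K + 1) < x) (h2 : x ≤ 1) :
    ∃ k ≤ K, 1 / (2:ℝ) ^ (k + 1) < x ∧ x ≤ 1 / 2 ^ k := by
  induction K with
  | zero => exact ⟨0, le_refl 0, h1, by simpa using h2⟩
  | succ K ih =>
      by_cases h : 1 / (2:ℝ) ^ (K + 1) < x
      · obtain ⟨k, hk, h'⟩ := ih h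
        exact ⟨k, hk.trans (Nat.le_succ K), h'⟩
      · exact ⟨K + 1, le_refl _, h1, not_lt.mp h⟩

lemma my_level (m : ℕ) (π q : ℕ → ℝ) (hm : 2 ≤ m)
    (hπ0 : ∀ j, 0 ≤ π j)
    (i : ℕ) (hi : i ≤ m) (α : ℝ) (hα : 0 < α) (k : ℕ)
    (S : ℝ) (hS0 : 0 ≤ S)
    (hle : ∀ i' ≤ m, gSCFDL m π q i' ≤ S)
    (W : Finset ℕ)
    (hW : ∀ j ∈ W, j + 2 ≤ i ∧ ((i:ℝ)/m - α / Real.sqrt (π j) < q j)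
          ∧ 1/(2:ℝ)^(k+1) < π j ∧ π j ≤ 1/2^k) :
    ∑ j ∈ W, Real.sqrt (π j) ≤ 3 * (α * m + Real.sqrt (m * S)) := by
  have hm0 : (0:ℝ) < m := by
    have : (2:ℝ) ≤ m := by exact_mod_cast hm
    linarith
  set A : ℝ := α * m with hAdef
  set B : ℝ := Real.sqrt (m * S) with hBdef
  have hA : 0 < A := by positivity
  have hB : 0 ≤ B := Real.sqrt_nonneg _
  have hB2 : B ^ 2 = m * S := Real.sq_sqrt (by positivity)
  set r : ℝ := Real.sqrt ((2:ℝ) ^ k) with hrdef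
  have hrpos : 0 < r := Real.sqrt_pos.mpr (by positivity)
  have hr2 : r ^ 2 = 2 ^ k := Real.sq_sqrt (by positivity)
  have hs2 : Real.sqrt 2 * Real.sqrt 2 = 2 := Real.mul_self_sqrt (by norm_num)
  have hs2pos : 0 < Real.sqrt 2 := Real.sqrt_pos.mpr (by norm_num)
  have hsq_le : ∀ j ∈ W, Real.sqrt (π j) ≤ 1 / r := by
    intro j hj
    have h1 := (hW j hj).2.2.2
    have h2 : Real.sqrt ((1:ℝ) / 2 ^ k) = 1 / r := by
      rw [one_div, Real.sqrt_inv, hrdef, one_div]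
    calc Real.sqrt (π j) ≤ Real.sqrt (1 / 2 ^ k) := Real.sqrt_le_sqrt h1
      _ = 1 / r := h2
  have hq_lb : ∀ j ∈ W, (i:ℝ)/m - Real.sqrt 2 * α * r < q j := by
    intro j hj
    obtain ⟨-, hviol, hlo, -⟩ := hW j hj
    have heq1 : Real.sqrt ((1:ℝ) / 2 ^ (k+1)) = 1 / (Real.sqrt 2 * r) := by
      rw [show (1:ℝ)/2^(k+1) = ((2:ℝ) * 2 ^ k)⁻¹ by rw [pow_succ]; ring]
      rw [Real.sqrt_inv, Real.sqrt_mul (by norm_num : (0:ℝ) ≤ 2), hrdef, one_div]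
    have h1 : 1 / (Real.sqrt 2 * r) ≤ Real.sqrt (π j) := by
      rw [← heq1]; exact Real.sqrt_le_sqrt hlo.le
    have h2 : 0 < 1 / (Real.sqrt 2 * r) := by positivity
    have h3 : α / Real.sqrt (π j) ≤ α / (1 / (Real.sqrt 2 * r)) :=
      div_le_div_of_nonneg_left hα.le h2 h1
    have h4 : α / (1 / (Real.sqrt 2 * r)) = Real.sqrt 2 * α * r := by
      field_simp
    linarith
  set D : ℝ := Real.sqrt 2 * r * (A + B) with hDdef
  have hD0 : 0 ≤ D := by positivity
  obtain ⟨n, hnD, hDn⟩ : ∃ n : ℕ, (n:ℝ) ≤ D ∧ D < n + 1 :=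
    ⟨⌊D⌋₊, Nat.floor_le hD0, Nat.lt_floor_add_one D⟩
  set Near := W.filter (fun j : ℕ => (i:ℝ) - (j:ℝ) ≤ D + 1) with hNeardef
  set Far := W.filter (fun j : ℕ => ¬((i:ℝ) - (j:ℝ) ≤ D + 1)) with hFardef
  have hsplit : ∑ j ∈ W, Real.sqrt (π j)
      = ∑ j ∈ Near, Real.sqrt (π j) + ∑ j ∈ Far, Real.sqrt (π j) :=
    (Finset.sum_filter_add_sum_filter_not W _ _).symm
  -- Near bound
  have hNear : ∑ j ∈ Near, Real.sqrt (π j) ≤ Real.sqrt 2 * (A + B) := by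
    rcases Finset.eq_empty_or_nonempty Near with hN | hN
    · rw [hN]; simp; positivity
    obtain ⟨ja, hja⟩ := hN
    have hia : 2 ≤ i := by
      have := (hW ja (Finset.mem_filter.mp (hNeardef ▸ hja)).1).1; omega
    have hNsub : Near ⊆ Finset.Icc (i - (n+1)) (i - 2) := by
      intro j hj
      rw [hNeardef, Finset.mem_filter] at hj
      obtain ⟨hjW, hnear⟩ := hj
      have hj2 : j + 2 ≤ i := (hW j hjW).1
      have hreal : (i:ℝ) < (j:ℝ) + (n:ℝ) + 2 := by linarith
      have hnat : i < j + n + 2 := by exact_mod_cast hreal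
      rw [Finset.mem_Icc]; omega
    have hcard : Near.card ≤ n := by
      have h := Finset.card_le_card hNsub
      have h2 := Nat.card_Icc (i-(n+1)) (i-2)
      omega
    have hsum : ∑ j ∈ Near, Real.sqrt (π j) ≤ Near.card • (1/r) :=
      Finset.sum_le_card_nsmul _ _ _ (fun j hj => hsq_le j (Finset.mem_filter.mp hj).1)
    rw [nsmul_eq_mul] at hsum
    have h1 : (Near.card : ℝ) * (1/r) ≤ D * (1/r) := by
      apply mul_le_mul_of_nonneg_right _ (by positivity)
      have : (Near.card : ℝ) ≤ n := by exact_mod_cast hcard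
      linarith
    have hDr : D * (1/r) = Real.sqrt 2 * (A + B) := by
      rw [hDdef]; field_simp
    linarith
  -- Far bound
  have hFar : ∑ j ∈ Far, Real.sqrt (π j) ≤ Real.sqrt 2 * B := by
    rcases Finset.eq_empty_or_nonempty Far with hF | hF
    · rw [hF]; simp; positivity
    · have hjn : ∀ j ∈ Far, j + n + 2 ≤ i := by
        intro j hj
        rw [hFardef, Finset.mem_filter] at hj
        have hfar : D + 1 < (i:ℝ) - j := by linarith [not_le.mp hj.2]
        have hreal : ((j:ℝ) + (n:ℝ) + 1) < i := by linarith
        have hnat : j + n + 1 < i := by exact_mod_cast hreal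
        omega
      obtain ⟨j₀, hj₀⟩ := hF
      have hi2 : n + 2 ≤ i := by have := hjn j₀ hj₀; omega
      set i' : ℕ := i - (n+2) with hi'def
      have hcast : (i' : ℝ) = (i:ℝ) - ((n:ℝ)+2) := by
        rw [hi'def, Nat.cast_sub hi2]; push_cast; ring
      have hi'm : i' ≤ m := le_trans (Nat.sub_le _ _) hi
      have hterm : ∀ j ∈ Far, B / (Real.sqrt 2 * r * m)
          < π j * max (q j - ((i':ℝ)+1)/m) 0 := by
        intro j hj
        rw [hFardef, Finset.mem_filter] at hj
        obtain ⟨hjW, -⟩ := hj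
        obtain ⟨-, -, hlo, -⟩ := hW j hjW
        have hq := hq_lb j hjW
        have hDm : D / m = Real.sqrt 2 * r * α + Real.sqrt 2 * r * B / m := by
          rw [hDdef, hAdef]; field_simp
        have hfrac : D / m < ((n:ℝ)+1) / m := div_lt_div_of_pos_right hDn hm0
        have hkey : Real.sqrt 2 * r * B / m < q j - ((i':ℝ)+1)/m := by
          rw [hcast]
          have he : ((i:ℝ) - ((n:ℝ)+2) + 1)/m = (i:ℝ)/m - ((n:ℝ)+1)/m := by ring
          rw [he]
          linarith
        have hmax : Real.sqrt 2 * r * B / m < max (q j - ((i':ℝ)+1)/m) 0 :=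
          lt_of_lt_of_le hkey (le_max_left _ _)
        have hlt : (1/(2:ℝ)^(k+1)) * (Real.sqrt 2 * r * B / m)
            < π j * max (q j - ((i':ℝ)+1)/m) 0 :=
          mul_lt_mul'' hlo hmax (by positivity) (by positivity)
        have heq : (1/(2:ℝ)^(k+1)) * (Real.sqrt 2 * r * B / m)
            = B / (Real.sqrt 2 * r * m) := by
          have h2k : (2:ℝ)^(k+1) = 2 * r^2 := by rw [hr2, pow_succ]; ring
          rw [h2k]
          field_simp
          linear_combination B * hs2
        linarith
      have hFsub : Far ⊆ Finset.range (i' + 1) := by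
        intro j hj
        have := hjn j hj
        rw [Finset.mem_range, hi'def]; omega
      have hsumS : ∑ j ∈ Far, π j * max (q j - ((i':ℝ)+1)/m) 0 ≤ S := by
        have h1 : ∑ j ∈ Far, π j * max (q j - ((i':ℝ)+1)/m) 0
            ≤ ∑ j ∈ Finset.range (i'+1), π j * max (q j - ((i':ℝ)+1)/m) 0 :=
          Finset.sum_le_sum_of_subset_of_nonneg hFsub
            (fun j _ _ => mul_nonneg (hπ0 j) (le_max_right _ _))
        have h2 : ∑ j ∈ Finset.range (i'+1), π j * max (q j - ((i':ℝ)+1)/m) 0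
            ≤ gSCFDL m π q i' := by
          unfold gSCFDL
          have : 0 ≤ ∑ j ∈ Finset.Icc (i'+1) m, π j * max ((i':ℝ)/m - q j) 0 :=
            Finset.sum_nonneg (fun j _ => mul_nonneg (hπ0 j) (le_max_right _ _))
          linarith
        linarith [hle i' hi'm]
      rcases hB.eq_or_lt with hB0 | hBpos
      · exfalso
        have hms : (m:ℝ) * S ≤ 0 := Real.sqrt_eq_zero'.mp hB0.symm
        have hSz : S = 0 := le_antisymm (by nlinarith) hS0
        have hpos : 0 < π j₀ * max (q j₀ - ((i':ℝ)+1)/m) 0 := by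
          have h := hterm j₀ hj₀
          have hz : B / (Real.sqrt 2 * r * m) = 0 := by rw [← hB0]; simp
          linarith
        have hsum' : π j₀ * max (q j₀ - ((i':ℝ)+1)/m) 0
            ≤ ∑ j ∈ Far, π j * max (q j - ((i':ℝ)+1)/m) 0 :=
          Finset.single_le_sum (f := fun j => π j * max (q j - ((i':ℝ)+1)/m) 0)
            (fun j _ => mul_nonneg (hπ0 j) (le_max_right _ _)) hj₀
        rw [hSz] at hsumS
        linarith
      · have hcardsum : Far.card • (B / (Real.sqrt 2 * r * m))
            ≤ ∑ j ∈ Far, π j * max (q j - ((i':ℝ)+1)/m) 0 :=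
          Finset.card_nsmul_le_sum _ _ _ (fun j hj => (hterm j hj).le)
        rw [nsmul_eq_mul] at hcardsum
        have hX : 0 < Real.sqrt 2 * r * (m:ℝ) := by positivity
        have h1 : (Far.card : ℝ) * (B / (Real.sqrt 2 * r * m)) ≤ S := hcardsum.trans hsumS
        have h1' : (Far.card : ℝ) * B ≤ S * (Real.sqrt 2 * r * m) := by
          rw [show (Far.card : ℝ) * (B / (Real.sqrt 2 * r * m))
              = (Far.card : ℝ) * B / (Real.sqrt 2 * r * m) from (mul_div_assoc _ _ _).symm,
            div_le_iff₀ hX] at h1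
          linarith
        have h2 : S * (Real.sqrt 2 * r * m) = (Real.sqrt 2 * r * B) * B := by
          nlinarith [hB2]
        have hcard : (Far.card : ℝ) ≤ Real.sqrt 2 * r * B := by
          rw [h2] at h1'
          exact le_of_mul_le_mul_right h1' hBpos
        have hsum : ∑ j ∈ Far, Real.sqrt (π j) ≤ Far.card • (1/r) :=
          Finset.sum_le_card_nsmul _ _ _ (fun j hj => hsq_le j (Finset.mem_filter.mp hj).1)
        rw [nsmul_eq_mul] at hsum
        have h3 : (Far.card : ℝ) * (1/r) ≤ (Real.sqrt 2 * r * B) * (1/r) :=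
          mul_le_mul_of_nonneg_right hcard (by positivity)
        have heq : (Real.sqrt 2 * r * B) * (1/r) = Real.sqrt 2 * B := by
          field_simp
        linarith
  have hs2le : Real.sqrt 2 ≤ 1.5 := by
    nlinarith [Real.sq_sqrt (show (0:ℝ) ≤ 2 by norm_num), Real.sqrt_nonneg 2]
  have e1 : Real.sqrt 2 * (A + B) ≤ 1.5 * (A + B) :=
    mul_le_mul_of_nonneg_right hs2le (by positivity)
  have e2 : Real.sqrt 2 * B ≤ 1.5 * B := mul_le_mul_of_nonneg_right hs2le hB
  rw [hsplit]
  have : (3:ℝ) * (α * m + Real.sqrt (m * S)) = 3 * (A + B) := by rw [hAdef, hBdef]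
  rw [this]
  linarith

/-- for bin weights `π_j ≥ 0` with `Σ π_j ≤ 1` and bin means
`q_j ∈ [0,1]`, for every index `i ≤ m` and every `α > 0`,
`Σ_{j<i} 1[q_j > i/m - α/√π_j]·√π_j ≤ 3 + C·(log m)·(α·m + √(m·SCDL_m))`
for an absolute constant `C`. -/
theorem violating_bins_bound :
    ∃ C : ℝ, 0 < C ∧
      ∀ (m : ℕ) (π q : ℕ → ℝ), 2 ≤ m →
        (∀ j, 0 ≤ π j) → (∑ j ∈ Finset.range (m + 1), π j ≤ 1) →
        (∀ j ≤ m, q j ∈ Set.Icc (0:ℝ) 1) →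
        ∀ i ≤ m, ∀ α : ℝ, 0 < α →
          (∑ j ∈ Finset.range i,
              if (i : ℝ) / m - α / Real.sqrt (π j) < q j then Real.sqrt (π j) else 0)
            ≤ 3 + C * Real.log m * (α * m + Real.sqrt (m * gSCDLm m π q)) := by
  refine ⟨40, by norm_num, ?_⟩
  intro m π q hm hπ0 hπsum hq i hi α hα
  have hm0 : (0:ℝ) < m := by
    have : (2:ℝ) ≤ m := by exact_mod_cast hm
    linarith
  set S : ℝ := gSCDLm m π q with hSdef
  have hfnn : ∀ i', 0 ≤ gSCFDL m π q i' := by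
    intro i'
    unfold gSCFDL
    have h1 : 0 ≤ ∑ j ∈ Finset.range (i'+1), π j * max (q j - ((i':ℝ)+1)/m) 0 :=
      Finset.sum_nonneg (fun j _ => mul_nonneg (hπ0 j) (le_max_right _ _))
    have h2 : 0 ≤ ∑ j ∈ Finset.Icc (i'+1) m, π j * max ((i':ℝ)/m - q j) 0 :=
      Finset.sum_nonneg (fun j _ => mul_nonneg (hπ0 j) (le_max_right _ _))
    linarith
  have hle : ∀ i' ≤ m, gSCFDL m π q i' ≤ S := by
    intro i' h
    rw [hSdef]
    exact Finset.le_sup' _ (Finset.mem_range.mpr (Nat.lt_succ_of_le h))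
  have hS0 : 0 ≤ S := (hfnn 0).trans (hle 0 (Nat.zero_le m))
  have hπle1 : ∀ j ≤ m, π j ≤ 1 := by
    intro j hj
    have h := Finset.single_le_sum (f := π) (fun x _ => hπ0 x)
      (Finset.mem_range.mpr (Nat.lt_succ_of_le hj))
    linarith
  set A : ℝ := α * m with hAdef
  set B : ℝ := Real.sqrt (m * S) with hBdef
  have hA : 0 < A := by positivity
  have hB : 0 ≤ B := Real.sqrt_nonneg _
  set L : ℕ := Nat.log 2 m with hLdef
  have hL1 : 1 ≤ L := Nat.le_log_of_pow_le (by norm_num) (by simpa using hm)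
  set K : ℕ := 4*(L+1) with hKdef
  set f : ℕ → ℝ := fun j => Real.sqrt (π j) with hfdef
  have hf0 : ∀ j, 0 ≤ f j := fun j => Real.sqrt_nonneg _
  set V := (Finset.range i).filter
      (fun j : ℕ => (i:ℝ)/m - α / Real.sqrt (π j) < q j) with hVdef
  have hLHS : (∑ j ∈ Finset.range i,
      if (i : ℝ) / m - α / Real.sqrt (π j) < q j then Real.sqrt (π j) else 0)
      = ∑ j ∈ V, f j := (Finset.sum_filter _ _).symm
  set V' := V.filter (fun j : ℕ => j + 2 ≤ i) with hV'def
  have hVmem : ∀ j ∈ V', j + 2 ≤ i ∧ ((i:ℝ)/m - α / Real.sqrt (π j) < q j) := by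
    intro j hj
    rw [hV'def, Finset.mem_filter, hVdef, Finset.mem_filter] at hj
    exact ⟨hj.2, hj.1.2⟩
  -- step 1 : drop j = i-1
  have hstep1 : ∑ j ∈ V, f j ≤ ∑ j ∈ V', f j + 1 := by
    have h := Finset.sum_filter_add_sum_filter_not V (fun j : ℕ => j + 2 ≤ i) f
    have hsub : V.filter (fun j : ℕ => ¬(j+2 ≤ i)) ⊆ {i-1} := by
      intro j hj
      rw [Finset.mem_filter, hVdef, Finset.mem_filter, Finset.mem_range] at hj
      rw [Finset.mem_singleton]
      omega
    have h1 : ∑ j ∈ V.filter (fun j : ℕ => ¬(j+2 ≤ i)), f j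
        ≤ ∑ j ∈ ({i-1} : Finset ℕ), f j :=
      Finset.sum_le_sum_of_subset_of_nonneg hsub (fun j _ _ => hf0 j)
    have h2 : ∑ j ∈ ({i-1} : Finset ℕ), f j = Real.sqrt (π (i-1)) :=
      Finset.sum_singleton _ _
    have h3 : Real.sqrt (π (i-1)) ≤ 1 := Real.sqrt_le_one.mpr (hπle1 _ (by omega))
    rw [← hV'def] at h
    linarith
  -- split V' into low and high parts
  have hsplit2 := Finset.sum_filter_add_sum_filter_not V'
    (fun j : ℕ => 1/(2:ℝ)^(K+1) < π j) f
  -- low part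
  have hlow : ∑ j ∈ V'.filter (fun j : ℕ => ¬(1/(2:ℝ)^(K+1) < π j)), f j ≤ 1 := by
    have hm4 : ((m:ℝ))^4 ≤ 2^(K+1) := by
      have h1 : m < 2^(L+1) := Nat.lt_pow_succ_log_self (by norm_num) m
      have h2 : m^4 ≤ 2^(K+1) := by
        calc m^4 ≤ (2^(L+1))^4 := Nat.pow_le_pow_left h1.le 4
          _ = 2^(4*(L+1)) := by rw [← pow_mul, mul_comm]
          _ ≤ 2^(K+1) := Nat.pow_le_pow_right (by norm_num) (by omega)
      exact_mod_cast h2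
    have hterm : ∀ j ∈ V'.filter (fun j : ℕ => ¬(1/(2:ℝ)^(K+1) < π j)),
        f j ≤ 1/(m:ℝ)^2 := by
      intro j hj
      have hple : π j ≤ 1/2^(K+1) := not_lt.mp (Finset.mem_filter.mp hj).2
      have h1 : Real.sqrt (π j) ≤ Real.sqrt (1/2^(K+1)) := Real.sqrt_le_sqrt hple
      have h4 : Real.sqrt ((1:ℝ)/2^(K+1)) ≤ 1/(m:ℝ)^2 := by
        rw [show (1:ℝ)/(m:ℝ)^2 = Real.sqrt ((1/(m:ℝ)^2)^2) from
          (Real.sqrt_sq (by positivity)).symm]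
        apply Real.sqrt_le_sqrt
        rw [div_pow, one_pow]
        have hmm : ((m:ℝ)^2)^2 = (m:ℝ)^4 := by ring
        rw [hmm]
        exact one_div_le_one_div_of_le (by positivity) hm4
      exact h1.trans h4
    have hsum := Finset.sum_le_card_nsmul _ f (1/(m:ℝ)^2) hterm
    rw [nsmul_eq_mul] at hsum
    have hcard : (V'.filter (fun j : ℕ => ¬(1/(2:ℝ)^(K+1) < π j))).card ≤ m := by
      have h1 : (V'.filter (fun j : ℕ => ¬(1/(2:ℝ)^(K+1) < π j))) ⊆ Finset.range i := by
        intro j hj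
        have := (Finset.mem_filter.mp hj).1
        rw [hV'def, Finset.mem_filter, hVdef, Finset.mem_filter] at this
        exact this.1.1
      calc (V'.filter (fun j : ℕ => ¬(1/(2:ℝ)^(K+1) < π j))).card
          ≤ (Finset.range i).card := Finset.card_le_card h1
        _ = i := Finset.card_range i
        _ ≤ m := hi
    have hcard' : ((V'.filter (fun j : ℕ => ¬(1/(2:ℝ)^(K+1) < π j))).card : ℝ) ≤ m := by
      exact_mod_cast hcard
    have h5 : ((V'.filter (fun j : ℕ => ¬(1/(2:ℝ)^(K+1) < π j))).card : ℝ) * (1/(m:ℝ)^2)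
        ≤ (m:ℝ) * (1/(m:ℝ)^2) := mul_le_mul_of_nonneg_right hcard' (by positivity)
    have h6 : (m:ℝ) * (1/(m:ℝ)^2) = 1/(m:ℝ) := by field_simp
    have h2m : (2:ℝ) ≤ m := by exact_mod_cast hm
    have h7 : 1/(m:ℝ) ≤ 1 := by
      rw [div_le_one hm0]; linarith
    linarith
  -- high part
  set t : ℕ → Finset ℕ :=
    fun k => V'.filter (fun j : ℕ => 1/(2:ℝ)^(k+1) < π j ∧ π j ≤ 1/2^k) with htdef
  have hhigh : ∑ j ∈ V'.filter (fun j : ℕ => 1/(2:ℝ)^(K+1) < π j), f j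
      ≤ ((K:ℝ)+1) * (3*(A+B)) := by
    have hcov : V'.filter (fun j : ℕ => 1/(2:ℝ)^(K+1) < π j)
        ⊆ (Finset.range (K+1)).biUnion t := by
      intro j hj
      rw [Finset.mem_filter] at hj
      obtain ⟨hjV', hpj⟩ := hj
      have hjm : j ≤ m := by
        have := (hVmem j hjV').1; omega
      have hj1 : π j ≤ 1 := hπle1 j hjm
      obtain ⟨k, hkK, hk1, hk2⟩ := my_cover K (π j) hpj hj1
      refine Finset.mem_biUnion.mpr ⟨k, Finset.mem_range.mpr (by omega), ?_⟩
      rw [htdef]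
      exact Finset.mem_filter.mpr ⟨hjV', hk1, hk2⟩
    have hlev : ∀ k ∈ Finset.range (K+1), ∑ j ∈ t k, f j ≤ 3*(A+B) := by
      intro k _
      have := my_level m π q hm hπ0 i hi α hα k S hS0 hle (t k) ?_
      · exact this
      · intro j hj
        rw [htdef, Finset.mem_filter] at hj
        exact ⟨(hVmem j hj.1).1, (hVmem j hj.1).2, hj.2.1, hj.2.2⟩
    calc ∑ j ∈ V'.filter (fun j : ℕ => 1/(2:ℝ)^(K+1) < π j), f j
        ≤ ∑ j ∈ (Finset.range (K+1)).biUnion t, f j :=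
          Finset.sum_le_sum_of_subset_of_nonneg hcov (fun j _ _ => hf0 j)
      _ ≤ ∑ k ∈ Finset.range (K+1), ∑ j ∈ t k, f j := my_sum_biUnion_le hf0
      _ ≤ ∑ k ∈ Finset.range (K+1), (3*(A+B)) := Finset.sum_le_sum hlev
      _ = ((K:ℝ)+1) * (3*(A+B)) := by
          rw [Finset.sum_const, Finset.card_range, nsmul_eq_mul]
          push_cast; ring
  -- numeric bound
  have hlog : (L:ℝ) * Real.log 2 ≤ Real.log m := by
    have h2L : (2:ℕ)^L ≤ m := Nat.pow_log_le_self 2 (by omega)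
    have h2L' : ((2:ℝ))^L ≤ m := by exact_mod_cast h2L
    have hlp : Real.log ((2:ℝ)^L) = (L:ℝ) * Real.log 2 := by rw [Real.log_pow]
    calc (L:ℝ) * Real.log 2 = Real.log ((2:ℝ)^L) := hlp.symm
      _ ≤ Real.log m := Real.log_le_log (by positivity) h2L'
  have hlog2 : (0.6931:ℝ) ≤ Real.log 2 := by
    linarith [Real.log_two_gt_d9]
  have hK : (3:ℝ)*((K:ℝ)+1) ≤ 40 * Real.log m := by
    have hKval : (K:ℝ) + 1 = 4*(L:ℝ) + 5 := by rw [hKdef]; push_cast; ring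
    have hL1' : (1:ℝ) ≤ L := by exact_mod_cast hL1
    nlinarith [hlog, hlog2, hL1']
  have hAB : 0 ≤ A + B := by positivity
  have hmul : (3:ℝ)*((K:ℝ)+1) * (A+B) ≤ 40 * Real.log m * (A+B) :=
    mul_le_mul_of_nonneg_right hK hAB
  have hre : ((K:ℝ)+1) * (3*(A+B)) = (3:ℝ)*((K:ℝ)+1) * (A+B) := by ring
  rw [hLHS]
  rw [hAdef, hBdef] at hmul hre hhigh ⊢
  linarith
end
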